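/- Let p = 2a and q = 2b be positive even integers, d = gcd(p,q), p = d·p', q = d·q', let k be a natural number and h : ℂ → ℂ any function. Define π : ℂ³ → ℂ³ by π(x,y,t) = (x, y, x^a y^b t), and for (x,y,z) ∈ ℂ³ define the linear form ω(x,y,z) : ℂ³ → ℂ by ω(x,y,z)(u,v,w) = p x^{p−1} y^q · u + q x^p y^{q−1} · v + (2z + (x^{p'}y^{q'})^k · h(x^{p'}y^{q'})) · w. Then π is complex differentiable and, for all (x,y,t) ∈ ℂ³ and all (u,v,w) ∈ ℂ³, the pullback satisfies ω(π(x,y,t))(Dπ(x,y,t)(u,v,w)) = x^{p−1} y^{q−1} · ((t² + 1)(p·y·u + q·x·v) + 2·x·y·t·w) + (x^{p'}y^{q'})^k · h(x^{p'}y^{q'}) · (a·x^{a−1} y^b·t·u + b·x^a y^{b−1}·t·v + x^a y^b·w), where Dπ(x,y,t) denotes the Fréchet derivative of π at (x,y,t). -/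

import Mathlib

/-- Pullback of the 1-form `ω = d(z² + x^p y^q) + (x^{p'}y^{q'})^k h(x^{p'}y^{q'}) dz`
(with `p = 2a`, `q = 2b` even) under the composed blow-up map
`π(x,y,t) = (x, y, x^a y^b t)`: `π` is holomorphic and the pullback `π*ω` equals
`x^{p−1} y^{q−1}·((t²+1)(p y u + q x v) + 2 x y t w)
  + (x^{p'}y^{q'})^k h(x^{p'}y^{q'})·(a x^{a−1} y^b t u + b x^a y^{b−1} t v + x^a y^b w)`. -/
theorem stmt10 (a b : ℕ) (ha : 1 ≤ a) (hb : 1 ≤ b)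
    (p q d p' q' k : ℕ) (hp : p = 2 * a) (hq : q = 2 * b)
    (hd : d = Nat.gcd p q) (hp' : p = d * p') (hq' : q = d * q')
    (h : ℂ → ℂ)
    (π : ℂ × ℂ × ℂ → ℂ × ℂ × ℂ)
    (hπ : π = fun v : ℂ × ℂ × ℂ => (v.1, v.2.1, v.1 ^ a * v.2.1 ^ b * v.2.2))
    (ω : ℂ × ℂ × ℂ → ℂ × ℂ × ℂ → ℂ)
    (hω : ω = fun z v : ℂ × ℂ × ℂ =>
      (p : ℂ) * z.1 ^ (p - 1) * z.2.1 ^ q * v.1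
      + (q : ℂ) * z.1 ^ p * z.2.1 ^ (q - 1) * v.2.1
      + (2 * z.2.2 + (z.1 ^ p' * z.2.1 ^ q') ^ k * h (z.1 ^ p' * z.2.1 ^ q')) * v.2.2) :
    Differentiable ℂ π ∧
    ∀ x y t u v w : ℂ,
      ω (π (x, y, t)) (fderiv ℂ π (x, y, t) (u, v, w)) =
        x ^ (p - 1) * y ^ (q - 1) *
            ((t ^ 2 + 1) * ((p : ℂ) * y * u + (q : ℂ) * x * v) + 2 * x * y * t * w)
        + (x ^ p' * y ^ q') ^ k * h (x ^ p' * y ^ q') *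
            ((a : ℂ) * x ^ (a - 1) * y ^ b * t * u
              + (b : ℂ) * x ^ a * y ^ (b - 1) * t * v
              + x ^ a * y ^ b * w) := by
  subst hπ hω
  constructor
  · fun_prop
  intro x y t u v w
  -- derivative of the third component
  have hx : HasFDerivAt (fun v : ℂ × ℂ × ℂ => v.1)
      (ContinuousLinearMap.fst ℂ ℂ (ℂ × ℂ)) (x, y, t) := hasFDerivAt_fst
  have hy : HasFDerivAt (fun v : ℂ × ℂ × ℂ => v.2.1)
      ((ContinuousLinearMap.fst ℂ ℂ ℂ).comp (ContinuousLinearMap.snd ℂ ℂ (ℂ × ℂ))) (x, y, t) :=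
    hasFDerivAt_snd.fst
  have ht : HasFDerivAt (fun v : ℂ × ℂ × ℂ => v.2.2)
      ((ContinuousLinearMap.snd ℂ ℂ ℂ).comp (ContinuousLinearMap.snd ℂ ℂ (ℂ × ℂ))) (x, y, t) :=
    hasFDerivAt_snd.snd
  have hxa : HasFDerivAt (fun v : ℂ × ℂ × ℂ => v.1 ^ a)
      (((a : ℂ) * x ^ (a - 1)) • ContinuousLinearMap.fst ℂ ℂ (ℂ × ℂ)) (x, y, t) :=
    (hasDerivAt_pow a x).comp_hasFDerivAt _ hx
  have hyb : HasFDerivAt (fun v : ℂ × ℂ × ℂ => v.2.1 ^ b)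
      (((b : ℂ) * y ^ (b - 1)) •
        ((ContinuousLinearMap.fst ℂ ℂ ℂ).comp (ContinuousLinearMap.snd ℂ ℂ (ℂ × ℂ)))) (x, y, t) :=
    (hasDerivAt_pow b y).comp_hasFDerivAt _ hy
  have h3 := (hxa.mul hyb).mul ht
  have hπ' := hx.prodMk (hy.prodMk h3)
  rw [HasFDerivAt.fderiv (f := fun v : ℂ × ℂ × ℂ => (v.1, v.2.1, v.1 ^ a * v.2.1 ^ b * v.2.2)) hπ']
  obtain ⟨m, rfl⟩ : ∃ m, a = m + 1 := ⟨a - 1, by omega⟩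
  obtain ⟨n, rfl⟩ : ∃ n, b = n + 1 := ⟨b - 1, by omega⟩
  subst hp hq
  simp only [ContinuousLinearMap.prod_apply, ContinuousLinearMap.add_apply,
    ContinuousLinearMap.smul_apply, ContinuousLinearMap.coe_comp', Function.comp_apply,
    ContinuousLinearMap.coe_fst', ContinuousLinearMap.coe_snd', smul_eq_mul,
    nsmul_eq_mul, Pi.mul_apply]
  have e1 : 2 * (m + 1) - 1 = 2 * m + 1 := by omega
  have e2 : 2 * (n + 1) - 1 = 2 * n + 1 := by omega
  have e3 : m + 1 - 1 = m := by omega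
  have e4 : n + 1 - 1 = n := by omega
  rw [e1, e2, e3, e4]
  push_cast
  ring
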